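/- Let n ≥ 1 and let W₀, W₁ ⊆ ℂⁿ be maximal totally real subspaces. Then there exists λ₁ > 0 such that for every C¹ map v : [0,1] → ℂⁿ with v(0) ∈ W₀ and v(1) ∈ W₁ there exists a vector w ∈ W₀ ∩ W₁ with λ₁ · ∫₀¹ ‖v(θ) − w‖² dθ ≤ ∫₀¹ ‖v′(θ)‖² dθ. -/

import Mathlib

open MeasureTheory Complex

/-- A maximal totally real subspace of `ℂⁿ`: a real subspace `W` with
`dim_ℝ W = n` and `W ∩ i·W = {0}`. -/
def IsMaxTotallyReal (n : ℕ) (W : Submodule ℝ (EuclideanSpace ℂ (Fin n))) : Prop :=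
  Module.finrank ℝ W = n ∧ ∀ x ∈ W, Complex.I • x ∈ W → x = 0

open Metric intervalIntegral


lemma aux1 {E : Type*} [NormedAddCommGroup E] [InnerProductSpace ℝ E] [FiniteDimensional ℝ E]
    (W₀ W₁ : Submodule ℝ E) :
    ∃ C > (0:ℝ), ∀ x ∈ W₀, ∀ y ∈ W₁,
      ‖x - (Submodule.orthogonalProjection (W₀ ⊓ W₁) x : E)‖ ≤ C * ‖x - y‖ := by
  set K := W₀ ⊓ W₁ with hK
  set T : Set E := Metric.sphere (0:E) 1 ∩ ((Kᗮ : Set E) ∩ (W₀ : Set E)) with hT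
  have hTc : IsCompact T := (isCompact_sphere 0 1).inter_right
    ((Submodule.closed_of_finiteDimensional _).inter (Submodule.closed_of_finiteDimensional _))
  have hq : ∀ x ∈ W₀, x - (Submodule.orthogonalProjection K x : E) ∈ Kᗮ ∧
      x - (Submodule.orthogonalProjection K x : E) ∈ W₀ := by
    intro x hx
    refine ⟨Submodule.sub_starProjection_mem_orthogonal (K := K) x, ?_⟩
    exact W₀.sub_mem hx (((Submodule.orthogonalProjection K x).2 : _ ∈ K).1)
  rcases T.eq_empty_or_nonempty with hTe | hTne
  · refine ⟨1, one_pos, fun x hx y hy => ?_⟩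
    obtain ⟨hq1, hq2⟩ := hq x hx
    set q := x - (Submodule.orthogonalProjection K x : E) with hqdef
    by_cases hq0 : q = 0
    · rw [hq0, norm_zero]; positivity
    · exfalso
      have hu : (‖q‖⁻¹ • q) ∈ T := by
        refine ⟨?_, Kᗮ.smul_mem _ hq1, W₀.smul_mem _ hq2⟩
        simp [norm_smul, norm_ne_zero_iff.2 hq0, inv_mul_cancel₀]
      rw [hTe] at hu; exact hu
  · have hcont : ContinuousOn (fun u => infDist u (W₁ : Set E)) T :=
      (continuous_infDist_pt _).continuousOn
    obtain ⟨u₀, hu₀, hmin⟩ := hTc.exists_isMinOn hTne hcont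
    set c := infDist u₀ (W₁ : Set E) with hc
    have hc0 : 0 < c := by
      rcases lt_or_eq_of_le (infDist_nonneg (x := u₀) (s := (W₁ : Set E))) with h | h
      · exact h
      · exfalso
        have hmem : u₀ ∈ (W₁ : Set E) := by
          rw [(Submodule.closed_of_finiteDimensional W₁).mem_iff_infDist_zero ⟨0, W₁.zero_mem⟩]
          exact h.symm
        have hK0 : u₀ ∈ K := ⟨hu₀.2.2, hmem⟩
        have : u₀ = 0 := by
          have := (Submodule.mem_orthogonal K u₀).1 hu₀.2.1 u₀ hK0
          simpa [inner_self_eq_zero] using this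
        have h1 := hu₀.1
        rw [this] at h1
        simp at h1
    refine ⟨c⁻¹, inv_pos.2 hc0, fun x hx y hy => ?_⟩
    obtain ⟨hq1, hq2⟩ := hq x hx
    set p := (Submodule.orthogonalProjection K x : E) with hp
    set q := x - p with hqdef
    by_cases hq0 : q = 0
    · rw [hq0, norm_zero]; positivity
    · have hqn : (0:ℝ) < ‖q‖ := norm_pos_iff.2 hq0
      set u := ‖q‖⁻¹ • q with hu
      have huT : u ∈ T := by
        refine ⟨?_, Kᗮ.smul_mem _ hq1, W₀.smul_mem _ hq2⟩
        simp [hu, norm_smul, hqn.ne', inv_mul_cancel₀]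
      have hz : (‖q‖⁻¹ • (y - p)) ∈ W₁ := W₁.smul_mem _ (W₁.sub_mem hy (Submodule.orthogonalProjection K x).2.2)
      have h1 : c ≤ ‖u - ‖q‖⁻¹ • (y - p)‖ := by
        calc c ≤ infDist u (W₁ : Set E) := hmin huT
        _ ≤ dist u (‖q‖⁻¹ • (y - p)) := infDist_le_dist_of_mem hz
        _ = ‖u - ‖q‖⁻¹ • (y - p)‖ := dist_eq_norm _ _
      have h2 : ‖u - ‖q‖⁻¹ • (y - p)‖ = ‖q‖⁻¹ * ‖x - y‖ := by
        rw [hu, ← smul_sub, norm_smul, Real.norm_eq_abs, abs_of_pos (inv_pos.2 hqn)]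
        congr 1
        rw [hqdef]
        abel_nf
      rw [h2] at h1
      have h3 : c * ‖q‖ ≤ ‖x - y‖ := by
        nlinarith [mul_inv_cancel₀ hqn.ne', norm_nonneg (x - y)]
      have h4 : c⁻¹ * (c * ‖q‖) ≤ c⁻¹ * ‖x - y‖ :=
        mul_le_mul_of_nonneg_left h3 (inv_pos.2 hc0).le
      rw [← mul_assoc, inv_mul_cancel₀ hc0.ne', one_mul] at h4
      linarith


section Analysis
variable {F : Type*} [NormedAddCommGroup F] [NormedSpace ℝ F] [CompleteSpace F]

lemma aux2 {v : ℝ → F} (hv : ContDiffOn ℝ 1 v (Set.Icc 0 1)) {θ : ℝ} (hθ : θ ∈ Set.Icc (0:ℝ) 1) :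
    ‖v θ - v 0‖ ≤ ∫ t in (0:ℝ)..1, ‖derivWithin v (Set.Icc 0 1) t‖ := by
  set g := derivWithin v (Set.Icc 0 1) with hg
  have hgc : ContinuousOn g (Set.Icc 0 1) :=
    hv.continuousOn_derivWithin (uniqueDiffOn_Icc one_pos) le_rfl
  have huIcc : Set.uIcc (0:ℝ) 1 = Set.Icc 0 1 := Set.uIcc_of_le zero_le_one
  have hgi : IntervalIntegrable g volume 0 1 := by
    apply ContinuousOn.intervalIntegrable; rwa [huIcc]
  have hgni : IntervalIntegrable (fun t => ‖g t‖) volume 0 1 := by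
    apply ContinuousOn.intervalIntegrable; rw [huIcc]; exact hgc.norm
  have hftc : v θ - v 0 = ∫ t in (0:ℝ)..θ, g t := by
    have := intervalIntegral.integral_eq_sub_of_hasDeriv_right_of_le hθ.1
      (hv.continuousOn.mono (Set.Icc_subset_Icc le_rfl hθ.2))
      (fun x hx => ?_) (hgi.mono_set ?_)
    · exact this.symm
    · have hx1 : x ∈ Set.Ioo (0:ℝ) 1 := ⟨hx.1, lt_of_lt_of_le hx.2 hθ.2⟩
      have hdiff := (hv.differentiableOn one_ne_zero x (Set.Ioo_subset_Icc_self hx1)).hasDerivWithinAt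
      exact hdiff.mono_of_mem_nhdsWithin (Icc_mem_nhdsGT_of_mem ⟨le_of_lt hx1.1, hx1.2⟩)
    · rw [huIcc, Set.uIcc_of_le hθ.1]
      exact Set.Icc_subset_Icc le_rfl hθ.2
  rw [hftc]
  calc ‖∫ t in (0:ℝ)..θ, g t‖ ≤ ∫ t in (0:ℝ)..θ, ‖g t‖ :=
        intervalIntegral.norm_integral_le_integral_norm hθ.1
  _ ≤ ∫ t in (0:ℝ)..1, ‖g t‖ := by
      apply intervalIntegral.integral_mono_interval le_rfl hθ.1 hθ.2 _ hgni
      filter_upwards with t using norm_nonneg _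
end Analysis


lemma aux3 {f : ℝ → ℝ} (hf : ContinuousOn f (Set.Icc 0 1)) :
    (∫ t in (0:ℝ)..1, f t)^2 ≤ ∫ t in (0:ℝ)..1, (f t)^2 := by
  have huIcc : Set.uIcc (0:ℝ) 1 = Set.Icc 0 1 := Set.uIcc_of_le zero_le_one
  set A := ∫ t in (0:ℝ)..1, f t with hA
  have hfi : IntervalIntegrable f volume 0 1 := by
    apply ContinuousOn.intervalIntegrable; rwa [huIcc]
  have hf2i : IntervalIntegrable (fun t => (f t)^2) volume 0 1 := by
    apply ContinuousOn.intervalIntegrable; rw [huIcc]; exact hf.pow 2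
  have h0 : (0:ℝ) ≤ ∫ t in (0:ℝ)..1, (f t - A)^2 :=
    intervalIntegral.integral_nonneg zero_le_one (fun t _ => sq_nonneg _)
  have h1 : (∫ t in (0:ℝ)..1, (f t - A)^2) =
      (∫ t in (0:ℝ)..1, (f t)^2) - 2*A*A + A^2 := by
    have heq : ∀ t, (f t - A)^2 = (f t)^2 - 2*A*(f t) + A^2 := fun t => by ring
    simp_rw [heq]
    rw [intervalIntegral.integral_add (hf2i.sub (hfi.const_mul (2*A)))
        intervalIntegrable_const,
      intervalIntegral.integral_sub hf2i (hfi.const_mul (2*A)),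
      intervalIntegral.integral_const_mul, intervalIntegral.integral_const]
    simp [← hA]
  nlinarith [h0, h1]

/-- the spectral gap (Poincaré-type inequality) for paths with
endpoints on two maximal totally real subspaces: there is `λ₁ > 0` so that every
`C¹` path `v : [0,1] → ℂⁿ` with `v 0 ∈ W₀`, `v 1 ∈ W₁` satisfies
`λ₁ ∫₀¹ ‖v - w‖² ≤ ∫₀¹ ‖v'‖²` for some `w ∈ W₀ ∩ W₁`. -/
theorem stmt9 (n : ℕ) (hn : 1 ≤ n) (W₀ W₁ : Submodule ℝ (EuclideanSpace ℂ (Fin n)))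
    (h0 : IsMaxTotallyReal n W₀) (h1 : IsMaxTotallyReal n W₁) :
    ∃ lam > (0 : ℝ), ∀ v : ℝ → EuclideanSpace ℂ (Fin n),
      ContDiffOn ℝ 1 v (Set.Icc 0 1) → v 0 ∈ W₀ → v 1 ∈ W₁ →
      ∃ w, w ∈ W₀ ∧ w ∈ W₁ ∧
        lam * ∫ θ in (0:ℝ)..1, ‖v θ - w‖ ^ 2 ≤
          ∫ θ in (0:ℝ)..1, ‖derivWithin v (Set.Icc 0 1) θ‖ ^ 2 := by
  obtain ⟨C, hC, hCkey⟩ := aux1 W₀ W₁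
  refine ⟨((1+C)^2)⁻¹, by positivity, fun v hv hv0 hv1 => ?_⟩
  set g := derivWithin v (Set.Icc 0 1) with hg
  have hgc : ContinuousOn g (Set.Icc 0 1) :=
    hv.continuousOn_derivWithin (uniqueDiffOn_Icc one_pos) le_rfl
  have huIcc : Set.uIcc (0:ℝ) 1 = Set.Icc 0 1 := Set.uIcc_of_le zero_le_one
  set w := (Submodule.orthogonalProjection (W₀ ⊓ W₁) (v 0) : EuclideanSpace ℂ (Fin n)) with hw
  refine ⟨w, (Submodule.orthogonalProjection (W₀ ⊓ W₁) (v 0)).2.1,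
    (Submodule.orthogonalProjection (W₀ ⊓ W₁) (v 0)).2.2, ?_⟩
  set A := ∫ t in (0:ℝ)..1, ‖g t‖ with hA
  have hA0 : 0 ≤ A :=
    intervalIntegral.integral_nonneg zero_le_one (fun t _ => norm_nonneg _)
  have hend : ‖v 0 - w‖ ≤ C * A := by
    calc ‖v 0 - w‖ ≤ C * ‖v 0 - v 1‖ := hCkey (v 0) hv0 (v 1) hv1
    _ = C * ‖v 1 - v 0‖ := by rw [norm_sub_rev]
    _ ≤ C * A := by
        have := aux2 hv (Set.right_mem_Icc.2 zero_le_one)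
        exact mul_le_mul_of_nonneg_left this hC.le
  have hpt : ∀ θ ∈ Set.Icc (0:ℝ) 1, ‖v θ - w‖ ≤ (1+C) * A := by
    intro θ hθ
    calc ‖v θ - w‖ = ‖(v θ - v 0) + (v 0 - w)‖ := by congr 1; abel
    _ ≤ ‖v θ - v 0‖ + ‖v 0 - w‖ := norm_add_le _ _
    _ ≤ A + C * A := add_le_add (aux2 hv hθ) hend
    _ = (1+C) * A := by ring
  have hL : (∫ θ in (0:ℝ)..1, ‖v θ - w‖ ^ 2) ≤ ((1+C) * A)^2 := by
    have hint : IntervalIntegrable (fun θ => ‖v θ - w‖ ^ 2) volume 0 1 := by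
      apply ContinuousOn.intervalIntegrable; rw [huIcc]
      exact ((hv.continuousOn.sub continuousOn_const).norm.pow 2)
    calc (∫ θ in (0:ℝ)..1, ‖v θ - w‖ ^ 2)
        ≤ ∫ _ in (0:ℝ)..1, ((1+C) * A)^2 := by
          apply intervalIntegral.integral_mono_on zero_le_one hint
            intervalIntegrable_const
          intro θ hθ
          exact pow_le_pow_left₀ (norm_nonneg _) (hpt θ hθ) 2
    _ = ((1+C) * A)^2 := by simp
  have hR : A^2 ≤ ∫ θ in (0:ℝ)..1, ‖g θ‖ ^ 2 := aux3 hgc.norm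
  rw [inv_mul_le_iff₀ (by positivity)]
  calc (∫ θ in (0:ℝ)..1, ‖v θ - w‖ ^ 2) ≤ (1+C)^2 * A^2 := by rw [← mul_pow]; exact hL
  _ ≤ (1+C)^2 * ∫ θ in (0:ℝ)..1, ‖g θ‖ ^ 2 :=
      mul_le_mul_of_nonneg_left hR (by positivity)
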